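/- Let m ≥ 14 be a positive integer divisible by 14. Then the binary narrow-sense primitive BCH code C_{(2, 2^m−1, 15, 1)} has length 2^m − 1, dimension 2^m − 7m − 1 over F_2, and minimum distance exactly 15. -/

import Mathlib

open Polynomial

/-- The narrow-sense primitive BCH code `C_(q,n,δ,1)` of length `n` and designed
distance `δ` with respect to the primitive element `β` of `E`: the `F`-linear
subspace of all `c` with `∑ i, c_i β^{i·j} = 0` for all `1 ≤ j ≤ δ - 1`. -/
def bchCode (F E : Type) [Field F] [Field E] [Algebra F E] (n δ : ℕ) (β : E) :
    Submodule F (Fin n → F) where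
  carrier := {c | ∀ j : ℕ, 1 ≤ j → j ≤ δ - 1 →
    ∑ i : Fin n, algebraMap F E (c i) * β ^ ((i : ℕ) * j) = 0}
  add_mem' := by
    intro a b ha hb j h1 h2
    simp only [Pi.add_apply, map_add, add_mul]
    rw [Finset.sum_add_distrib, ha j h1 h2, hb j h1 h2, add_zero]
  zero_mem' := by
    intro j h1 h2
    simp
  smul_mem' := by
    intro r a ha j h1 h2
    simp only [Pi.smul_apply, smul_eq_mul, map_mul, mul_assoc]
    rw [← Finset.mul_sum, ha j h1 h2, mul_zero]

/-- A (nonzero, linear) code `Γ ⊆ F^n` has minimum distance `d`: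
there is a nonzero codeword of Hamming weight `d`, and every nonzero codeword
has Hamming weight at least `d`. -/
def hasMinDist {F : Type} [Field F] [DecidableEq F] {n : ℕ}
    (Γ : Submodule F (Fin n → F)) (d : ℕ) : Prop :=
  (∃ c ∈ Γ, c ≠ 0 ∧ hammingNorm c = d) ∧ ∀ c ∈ Γ, c ≠ 0 → d ≤ hammingNorm c

set_option linter.unusedSectionVars false
set_option linter.unusedVariables false
set_option maxHeartbeats 1000000

section BCHAux
variable {F E : Type} [Field F] [Fintype F] [DecidableEq F] [Field E] [Fintype E] [Algebra F E]


lemma F01 (hF : Fintype.card F = 2) (x : F) : x = 0 ∨ x = 1 := by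
  have h2 : ({0, 1} : Finset F).card = 2 := by
    rw [Finset.card_pair]; exact zero_ne_one
  have hsub : (Finset.univ : Finset F) ⊆ {0, 1} := by
    have := Finset.eq_of_subset_of_card_le (Finset.subset_univ ({0,1} : Finset F))
      (by rw [Finset.card_univ, h2, hF])
    exact this ▸ Finset.Subset.refl _
  have := hsub (Finset.mem_univ x)
  simpa using this

lemma Fchar2 (hF : Fintype.card F = 2) : (1 + 1 : F) = 0 := by
  rcases F01 hF (1 + 1 : F) with h | h
  · exact h
  · have h' : (1:F) + 1 = 1 + 0 := by rw [add_zero]; exact h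
    exact absurd (add_left_cancel h') one_ne_zero

lemma Echar2 (hF : Fintype.card F = 2) : CharP E 2 := by
  have h2 : (2 : E) = 0 := by
    have : ((1 : F) + 1) = 0 := Fchar2 hF
    have := congrArg (algebraMap F E) this
    rw [map_add, map_one, map_zero] at this
    rw [show (2:E) = 1 + 1 by norm_num, this]
  have hching := ringChar.charP E
  have hdvd : ringChar E ∣ 2 := ringChar.dvd h2
  have hne0 : ringChar E ≠ 0 := CharP.char_ne_zero_of_finite E (ringChar E)
  have hne1 : ringChar E ≠ 1 := CharP.ringChar_ne_one
  have : ringChar E = 2 := by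
    rcases (Nat.le_of_dvd (by norm_num) hdvd).lt_or_eq with h | h
    · omega
    · exact h
  rw [← this]; exact hching

lemma algebraMap_pow_fix (hF : Fintype.card F = 2) (x : F) {k : ℕ} (hk : k ≠ 0) :
    (algebraMap F E x) ^ k = algebraMap F E x := by
  rcases F01 hF x with h | h <;> subst h <;> simp [zero_pow hk]

lemma beta_ne_zero {m : ℕ} (hm : 2 ≤ m) (hE : Fintype.card E = 2 ^ m) (β : E)
    (hβ : ∀ x : E, x ≠ 0 → ∃ k : ℕ, x = β ^ k) : β ≠ 0 := by
  letI := Classical.decEq E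
  intro h0
  have hcard : 2 < Fintype.card E := by
    calc 2 < 2^2 := by norm_num
    _ ≤ 2^m := Nat.pow_le_pow_right (by norm_num) hm
    _ = Fintype.card E := hE.symm
  have h2 : ({0, 1} : Finset E).card = 2 := by rw [Finset.card_pair]; exact zero_ne_one
  have hss : ({0,1} : Finset E) ⊂ Finset.univ := by
    rw [Finset.ssubset_univ_iff]
    intro h
    rw [← Finset.card_univ, ← h, h2] at hcard; exact lt_irrefl _ hcard
  obtain ⟨x, -, hx⟩ := Finset.exists_of_ssubset hss
  simp only [Finset.mem_insert, Finset.mem_singleton, not_or] at hx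
  obtain ⟨k, hk⟩ := hβ x hx.1
  subst h0
  rcases Nat.eq_zero_or_pos k with rfl | hkpos
  · rw [pow_zero] at hk; exact hx.2 hk
  · rw [zero_pow hkpos.ne'] at hk
    exact hx.1 hk

lemma beta_orderOf {m : ℕ} (hm : 2 ≤ m) (hE : Fintype.card E = 2 ^ m) (β : E)
    (hβ : ∀ x : E, x ≠ 0 → ∃ k : ℕ, x = β ^ k) : orderOf β = 2 ^ m - 1 := by
  letI := Classical.decEq E
  have hb0 : β ≠ 0 := beta_ne_zero hm hE β hβ
  set βu : Eˣ := Units.mk0 β hb0 with hβu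
  have hmem : ∀ u : Eˣ, u ∈ Subgroup.zpowers βu := by
    intro u
    obtain ⟨k, hk⟩ := hβ (u : E) (Units.ne_zero u)
    refine ⟨(k : ℤ), Units.ext ?_⟩
    show ((βu ^ (k:ℤ) : Eˣ) : E) = u
    rw [zpow_natCast, Units.val_pow_eq_pow_val, hβu, Units.val_mk0, hk]
  have hord : orderOf βu = Nat.card Eˣ := orderOf_eq_card_of_forall_mem_zpowers hmem
  have hcard : Nat.card Eˣ = 2 ^ m - 1 := by
    rw [Nat.card_eq_fintype_card, Fintype.card_units, hE]
  have : orderOf (βu : E) = orderOf βu := orderOf_units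
  rw [hβu] at this
  simp only [Units.val_mk0] at this
  rw [this, hord, hcard]

lemma beta_pow_inj {m : ℕ} (hm : 2 ≤ m) (hE : Fintype.card E = 2 ^ m) (β : E)
    (hβ : ∀ x : E, x ≠ 0 → ∃ k : ℕ, x = β ^ k) {i j : ℕ}
    (hi : i < 2 ^ m - 1) (hj : j < 2 ^ m - 1) (h : β ^ i = β ^ j) : i = j := by
  have ho := beta_orderOf hm hE β hβ
  exact pow_injOn_Iio_orderOf (by rwa [ho]) (by rwa [ho]) h

lemma beta_pow_surj {m : ℕ} (hm : 2 ≤ m) (hE : Fintype.card E = 2 ^ m) (β : E)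
    (hβ : ∀ x : E, x ≠ 0 → ∃ k : ℕ, x = β ^ k) (x : E) (hx : x ≠ 0) :
    ∃ i : ℕ, i < 2 ^ m - 1 ∧ β ^ i = x := by
  obtain ⟨k, hk⟩ := hβ x hx
  have ho := beta_orderOf hm hE β hβ
  refine ⟨k % (2^m - 1), ?_, ?_⟩
  · apply Nat.mod_lt
    have : 4 ≤ 2^m := by calc (4:ℕ) = 2^2 := by norm_num
                              _ ≤ 2^m := Nat.pow_le_pow_right (by norm_num) hm
    omega
  · rw [← ho, pow_mod_orderOf, hk]

lemma pow_mod_reduce {m : ℕ} (hE : Fintype.card E = 2 ^ m) (x : E) (hx : x ≠ 0) (k : ℕ) :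
    x ^ (k % (2 ^ m - 1)) = x ^ k := by
  have h1 : x ^ (2^m - 1) = 1 := by
    have := FiniteField.pow_card_sub_one_eq_one x hx
    rwa [hE] at this
  conv_rhs => rw [← Nat.div_add_mod k (2^m - 1)]
  rw [pow_add, pow_mul, h1, one_pow, one_mul]

lemma pow_two_pow_m {m : ℕ} (hE : Fintype.card E = 2 ^ m) (x : E) : x ^ (2^m) = x := by
  have := FiniteField.pow_card x
  rwa [hE] at this

lemma nt_aux {m o o' u : ℕ} (hm : 14 ≤ m) (ho : o ≤ 13) (ho' : o' ≤ 13)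
    (hoodd : o % 2 = 1) (ho'odd : o' % 2 = 1) (hu : u < m)
    (h : o * 2 ^ u ≡ o' [MOD 2 ^ m - 1]) : o = o' ∧ u = 0 := by
  set n := 2 ^ m - 1 with hn
  have h2m : 2 ^ 14 ≤ 2 ^ m := Nat.pow_le_pow_right (by norm_num) hm
  have hbig : 16384 ≤ 2 ^ m := by norm_num at h2m ⊢; exact h2m
  have ho'n : o' < n := by omega
  have hmod : (o * 2 ^ u) % n = o' := by
    have h' : (o * 2 ^ u) % n = o' % n := h
    rwa [Nat.mod_eq_of_lt ho'n] at h'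
  rcases Nat.eq_zero_or_pos u with rfl | hu1
  · refine ⟨?_, rfl⟩
    rw [pow_zero, mul_one] at hmod
    rw [← hmod, Nat.mod_eq_of_lt (by omega)]
  · exfalso
    rcases le_or_gt u (m - 4) with hcase | hcase
    · have hlt : o * 2 ^ u < n := by
        have h1 : 2 ^ u ≤ 2 ^ (m - 4) := Nat.pow_le_pow_right (by norm_num) hcase
        have h2 : o * 2 ^ u ≤ 13 * 2 ^ (m - 4) := Nat.mul_le_mul ho h1
        have h3 : 2 ^ m = 16 * 2 ^ (m - 4) := by
          rw [show (16:ℕ) = 2 ^ 4 from rfl, ← pow_add]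
          congr 1; omega
        have h4 : 1 ≤ 2 ^ (m - 4) := Nat.one_le_two_pow
        omega
      rw [Nat.mod_eq_of_lt hlt] at hmod
      have heven : 2 ∣ o * 2 ^ u := Dvd.dvd.mul_left (dvd_pow_self 2 hu1.ne') o
      omega
    · set r := m - u with hr
      have hr13 : 1 ≤ r ∧ r ≤ 3 := by omega
      obtain ⟨q, l, hdm, hlsmall⟩ : ∃ q l, 2 ^ r * q + l = o ∧ l < 2 ^ r :=
        ⟨o / 2 ^ r, o % 2 ^ r, Nat.div_add_mod o (2 ^ r), Nat.mod_lt o (by positivity)⟩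
      have h2dvd : (2:ℕ) ∣ 2 ^ r := dvd_pow_self 2 (by omega : r ≠ 0)
      have h2dvd' : (2:ℕ) ∣ 2 ^ r * q := h2dvd.mul_right q
      have hlodd : l % 2 = 1 := by omega
      have hkey : o * 2 ^ u = q * 2 ^ m + l * 2 ^ u := by
        have h5 : (2 ^ r * q + l) * 2 ^ u = q * (2 ^ r * 2 ^ u) + l * 2 ^ u := by ring
        rw [← hdm, h5, ← pow_add]
        congr 3
        omega
      have hmodv : (o * 2 ^ u) % n = (q + l * 2 ^ u) % n := by
        rw [hkey]
        have h2mn : 2 ^ m = n + 1 := by omega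
        have h6 : q * 2 ^ m + l * 2 ^ u = (q + l * 2 ^ u) + q * n := by rw [h2mn]; ring
        rw [h6, Nat.add_mul_mod_self_right]
      -- bounds
      have hlu : l * 2 ^ u + 2 ^ u ≤ 2 ^ m := by
        have h7 : l + 1 ≤ 2 ^ r := hlsmall
        calc l * 2 ^ u + 2 ^ u = (l + 1) * 2 ^ u := by ring
        _ ≤ 2 ^ r * 2 ^ u := Nat.mul_le_mul_right _ h7
        _ = 2 ^ m := by rw [← pow_add]; congr 1; omega
      have hq6 : q ≤ 6 := by
        have h8 : (2:ℕ) ≤ 2 ^ r := by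
          calc (2:ℕ) = 2 ^ 1 := rfl
          _ ≤ 2 ^ r := Nat.pow_le_pow_right (by norm_num) (by omega)
        have h9 : 2 * q ≤ 2 ^ r * q := Nat.mul_le_mul_right q h8
        omega
      have h2u : 2048 ≤ 2 ^ u := by
        calc (2048:ℕ) = 2 ^ 11 := by norm_num
        _ ≤ 2 ^ u := Nat.pow_le_pow_right (by norm_num) (by omega)
      have hL1 : 2 ^ u ≤ l * 2 ^ u := Nat.le_mul_of_pos_left _ (by omega)
      have hvn : q + l * 2 ^ u < n := by omega
      rw [hmodv, Nat.mod_eq_of_lt hvn] at hmod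
      omega

lemma n_coprime_two_pow {m s : ℕ} (hm : 1 ≤ m) : Nat.Coprime (2 ^ m - 1) (2 ^ s) := by
  apply Nat.Coprime.pow_right
  rw [Nat.coprime_two_right]
  have h1 : 2 ^ 1 ≤ 2 ^ m := Nat.pow_le_pow_right (by norm_num) hm
  have h2 : 2 ∣ 2 ^ m := dvd_pow_self 2 (by omega)
  exact Nat.odd_iff.mpr (by omega)

lemma exp_ne_zero {m : ℕ} (hm : 14 ≤ m) {a t : ℕ} (ha : a < 7) (ht : t < m) :
    ((2 * a + 1) * 2 ^ t) % (2 ^ m - 1) ≠ 0 := by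
  intro h0
  have hdvd : (2 ^ m - 1) ∣ (2 * a + 1) * 2 ^ t := Nat.dvd_of_mod_eq_zero h0
  have hco : Nat.Coprime (2 ^ m - 1) (2 ^ t) := n_coprime_two_pow (by omega)
  have := hco.dvd_of_dvd_mul_right hdvd
  have hle := Nat.le_of_dvd (by omega) this
  have h2m : 2 ^ 14 ≤ 2 ^ m := Nat.pow_le_pow_right (by norm_num) hm
  norm_num at h2m
  omega

lemma exp_inj_aux {m : ℕ} (hm : 14 ≤ m) {a b t s : ℕ} (ha : a < 7) (hb : b < 7)
    (ht : t < m) (hst : s ≤ t)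
    (h : (2 * a + 1) * 2 ^ t ≡ (2 * b + 1) * 2 ^ s [MOD 2 ^ m - 1]) : a = b ∧ t = s := by
  have hsplit : (2 * a + 1) * 2 ^ t = ((2 * a + 1) * 2 ^ (t - s)) * 2 ^ s := by
    rw [mul_assoc, ← pow_add]
    congr 2
    omega
  rw [hsplit] at h
  have hcan : (2 * a + 1) * 2 ^ (t - s) ≡ (2 * b + 1) [MOD 2 ^ m - 1] :=
    Nat.ModEq.cancel_right_of_coprime (n_coprime_two_pow (by omega)) h
  have := nt_aux hm (by omega) (by omega) (by omega) (by omega) (by omega) hcan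
  omega

lemma exp_inj {m : ℕ} (hm : 14 ≤ m) {a b t s : ℕ} (ha : a < 7) (hb : b < 7)
    (ht : t < m) (hs : s < m)
    (h : ((2 * a + 1) * 2 ^ t) % (2 ^ m - 1) = ((2 * b + 1) * 2 ^ s) % (2 ^ m - 1)) :
    a = b ∧ t = s := by
  rcases le_total s t with h' | h'
  · exact exp_inj_aux hm ha hb ht h' h
  · have := exp_inj_aux hm hb ha hs h' h.symm
    omega

lemma trace_fun_ne_zero {m : ℕ} (hm : 1 ≤ m) (hE : Fintype.card E = 2 ^ m) :
    ∃ y : E, ∑ t ∈ Finset.range m, y ^ 2 ^ t ≠ 0 := by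
  by_contra hcon
  push_neg at hcon
  set Q : E[X] := ∑ t ∈ Finset.range m, X ^ 2 ^ t with hQ
  have hdeg : Q.natDegree < Fintype.card E := by
    rw [hE]
    calc Q.natDegree ≤ 2 ^ (m - 1) := by
          apply Polynomial.natDegree_sum_le_of_forall_le
          intro t ht
          rw [Polynomial.natDegree_X_pow]
          exact Nat.pow_le_pow_right (by norm_num) (by simp at ht; omega)
    _ < 2 ^ m := Nat.pow_lt_pow_right (by norm_num) (by omega)
  have heval : ∀ x ∈ (Finset.univ : Finset E), Q.eval x = 0 := by
    intro x _
    rw [hQ]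
    simp only [Polynomial.eval_finset_sum, Polynomial.eval_pow, Polynomial.eval_X]
    exact hcon x
  have hQ0 : Q = 0 := Polynomial.eq_zero_of_natDegree_lt_card_of_eval_eq_zero' Q
    Finset.univ heval (by rwa [Finset.card_univ])
  have hc : Q.coeff 1 = 1 := by
    rw [hQ, Polynomial.finset_sum_coeff]
    rw [Finset.sum_eq_single_of_mem 0 (Finset.mem_range.mpr (by omega))]
    · simp
    · intro t _ ht0
      rw [Polynomial.coeff_X_pow, if_neg]
      intro hcontra
      have h2 : 2 ^ 1 ≤ 2 ^ t := Nat.pow_le_pow_right (by norm_num) (by omega)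
      omega
  rw [hQ0] at hc
  simp at hc

lemma core_poly {m : ℕ} (hm : 14 ≤ m) (hF : Fintype.card F = 2) (hE : Fintype.card E = 2 ^ m)
    (a : Fin 7 → E)
    (h : ∀ x : E, ∑ t ∈ Finset.range m, (∑ j : Fin 7, a j * x ^ (2 * (j : ℕ) + 1)) ^ 2 ^ t = 0) :
    a = 0 := by
  haveI : CharP E 2 := Echar2 (F := F) hF
  haveI : Fact (Nat.Prime 2) := ⟨Nat.prime_two⟩
  haveI : ExpChar E 2 := ExpChar.prime Nat.prime_two
  have h2m : (2:ℕ) ^ 14 ≤ 2 ^ m := Nat.pow_le_pow_right (by norm_num) hm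
  have hbig : 16384 ≤ 2 ^ m := by norm_num at h2m ⊢; exact h2m
  set P : E[X] := ∑ t ∈ Finset.range m, ∑ j : Fin 7,
      C (a j ^ 2 ^ t) * X ^ (((2 * (j : ℕ) + 1) * 2 ^ t) % (2 ^ m - 1)) with hP
  have heval : ∀ x : E, P.eval x = 0 := by
    intro x
    have hevalP : P.eval x = ∑ t ∈ Finset.range m, ∑ j : Fin 7,
        a j ^ 2 ^ t * x ^ (((2 * (j : ℕ) + 1) * 2 ^ t) % (2 ^ m - 1)) := by
      rw [hP]
      simp [Polynomial.eval_finset_sum]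
    rw [hevalP]
    rcases eq_or_ne x 0 with rfl | hx
    · apply Finset.sum_eq_zero
      intro t ht
      apply Finset.sum_eq_zero
      intro j _
      rw [zero_pow (exp_ne_zero hm (j.isLt) (Finset.mem_range.mp ht)), mul_zero]
    · have hred : ∀ t ∈ Finset.range m, ∀ j : Fin 7,
          x ^ (((2 * (j : ℕ) + 1) * 2 ^ t) % (2 ^ m - 1)) = x ^ ((2 * (j : ℕ) + 1) * 2 ^ t) := by
        intro t _ j
        exact pow_mod_reduce hE x hx _
      calc ∑ t ∈ Finset.range m, ∑ j : Fin 7,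
            a j ^ 2 ^ t * x ^ (((2 * (j : ℕ) + 1) * 2 ^ t) % (2 ^ m - 1))
          = ∑ t ∈ Finset.range m, (∑ j : Fin 7, a j * x ^ (2 * (j : ℕ) + 1)) ^ 2 ^ t := by
            apply Finset.sum_congr rfl
            intro t ht
            rw [sum_pow_char_pow]
            apply Finset.sum_congr rfl
            intro j _
            rw [hred t ht j, mul_pow, ← pow_mul]
      _ = 0 := h x
  have hnpos : 0 < 2 ^ m - 1 := by omega
  have hdeg : P.natDegree < Fintype.card E := by
    rw [hE]
    have : P.natDegree ≤ 2 ^ m - 1 - 1 := by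
      apply Polynomial.natDegree_sum_le_of_forall_le
      intro t _
      apply Polynomial.natDegree_sum_le_of_forall_le
      intro j _
      refine le_trans (Polynomial.natDegree_C_mul_le _ _) ?_
      rw [Polynomial.natDegree_X_pow]
      have := Nat.mod_lt ((2 * (j : ℕ) + 1) * 2 ^ t) hnpos
      omega
    omega
  have hP0 : P = 0 := Polynomial.eq_zero_of_natDegree_lt_card_of_eval_eq_zero' P
    Finset.univ (fun x _ => heval x) (by rwa [Finset.card_univ])
  funext j₀
  have hcoeff : P.coeff (((2 * (j₀ : ℕ) + 1) * 2 ^ 0) % (2 ^ m - 1)) = a j₀ := by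
    rw [hP, Polynomial.finset_sum_coeff]
    rw [Finset.sum_eq_single_of_mem 0 (Finset.mem_range.mpr (by omega))]
    · rw [Polynomial.finset_sum_coeff]
      rw [Finset.sum_eq_single_of_mem j₀ (Finset.mem_univ _)]
      · rw [Polynomial.coeff_C_mul, Polynomial.coeff_X_pow, if_pos rfl, mul_one]
        norm_num
      · intro j _ hj
        rw [Polynomial.coeff_C_mul, Polynomial.coeff_X_pow, if_neg, mul_zero]
        intro hcon
        have := exp_inj hm j₀.isLt j.isLt (by omega : (0:ℕ) < m) (by omega : (0:ℕ) < m) hcon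
        exact hj (Fin.ext this.1.symm)
    · intro t ht ht0
      rw [Polynomial.finset_sum_coeff]
      apply Finset.sum_eq_zero
      intro j _
      rw [Polynomial.coeff_C_mul, Polynomial.coeff_X_pow, if_neg, mul_zero]
      intro hcon
      have := exp_inj hm j₀.isLt j.isLt (by omega : (0:ℕ) < m) (Finset.mem_range.mp ht) hcon
      exact ht0 this.2.symm
  rw [hP0, Polynomial.coeff_zero] at hcoeff
  simpa using hcoeff.symm

lemma tr_add {m : ℕ} (hF : Fintype.card F = 2) (x y : E) :
    ∑ t ∈ Finset.range m, (x + y) ^ 2 ^ t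
      = ∑ t ∈ Finset.range m, x ^ 2 ^ t + ∑ t ∈ Finset.range m, y ^ 2 ^ t := by
  haveI : CharP E 2 := Echar2 (E := E) hF
  haveI : ExpChar E 2 := ExpChar.prime Nat.prime_two
  rw [← Finset.sum_add_distrib]
  apply Finset.sum_congr rfl
  intro t _
  rw [add_pow_char_pow]

lemma tr_sq {m : ℕ} (hm : 1 ≤ m) (hF : Fintype.card F = 2) (hE : Fintype.card E = 2 ^ m)
    (x : E) :
    (∑ t ∈ Finset.range m, x ^ 2 ^ t) ^ 2 = ∑ t ∈ Finset.range m, x ^ 2 ^ t := by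
  haveI : CharP E 2 := Echar2 (E := E) hF
  haveI : ExpChar E 2 := ExpChar.prime Nat.prime_two
  rw [sum_pow_char]
  have hshift : ∀ t : ℕ, (x ^ 2 ^ t) ^ 2 = x ^ 2 ^ (t + 1) := by
    intro t
    rw [← pow_mul, ← pow_succ]
  have h1 : ∑ t ∈ Finset.range (m + 1), x ^ 2 ^ t
      = ∑ t ∈ Finset.range m, x ^ 2 ^ (t + 1) + x ^ 2 ^ 0 := Finset.sum_range_succ' _ m
  have h2 : ∑ t ∈ Finset.range (m + 1), x ^ 2 ^ t
      = ∑ t ∈ Finset.range m, x ^ 2 ^ t + x ^ 2 ^ m := Finset.sum_range_succ _ m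
  have h3 : x ^ 2 ^ m = x := pow_two_pow_m hE x
  have h4 : x ^ 2 ^ 0 = x := by norm_num
  have h5 : ∑ t ∈ Finset.range m, (x ^ 2 ^ t) ^ 2 = ∑ t ∈ Finset.range m, x ^ 2 ^ (t + 1) :=
    Finset.sum_congr rfl fun t _ => hshift t
  have h6 := h1.symm.trans h2
  rw [h3, h4] at h6
  rw [h5]
  exact add_right_cancel h6

lemma tr_zero {m : ℕ} : ∑ t ∈ Finset.range m, (0:E) ^ 2 ^ t = 0 := by
  apply Finset.sum_eq_zero
  intro t _
  exact zero_pow (by positivity)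

open Classical in
lemma exists_tau {m : ℕ} (hm : 1 ≤ m) (hF : Fintype.card F = 2) (hE : Fintype.card E = 2 ^ m) :
    ∃ τ : E →ₗ[F] F, ∀ x : E, algebraMap F E (τ x) = ∑ t ∈ Finset.range m, x ^ 2 ^ t := by
  have hval : ∀ x : E, (∑ t ∈ Finset.range m, x ^ 2 ^ t) = 0
      ∨ (∑ t ∈ Finset.range m, x ^ 2 ^ t) = 1 := by
    intro x
    set y := ∑ t ∈ Finset.range m, x ^ 2 ^ t with hy
    have hsq : y ^ 2 = y := tr_sq hm hF hE x
    have : y * (y - 1) = 0 := by ring_nf; linear_combination hsq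
    rcases mul_eq_zero.mp this with h | h
    · exact Or.inl h
    · exact Or.inr (by linear_combination h)
  set f : E → F := fun x => if (∑ t ∈ Finset.range m, x ^ 2 ^ t) = 1 then 1 else 0 with hf
  have hspec : ∀ x : E, algebraMap F E (f x) = ∑ t ∈ Finset.range m, x ^ 2 ^ t := by
    intro x
    rcases hval x with h | h
    · have hfx : f x = 0 := by
        rw [hf]
        exact if_neg (fun hc => zero_ne_one (h.symm.trans hc))
      rw [hfx, map_zero]; exact h.symm
    · have hfx : f x = 1 := by rw [hf]; exact if_pos h
      rw [hfx, map_one]; exact h.symm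
  have hinj : Function.Injective (algebraMap F E) := (algebraMap F E).injective
  refine ⟨⟨⟨f, ?_⟩, ?_⟩, hspec⟩
  · intro x y
    apply hinj
    rw [map_add, hspec, hspec, hspec, tr_add hF]
  · intro r x
    simp only [RingHom.id_apply, smul_eq_mul]
    rcases F01 hF r with hr | hr
    · subst hr
      apply hinj
      rw [zero_smul, zero_mul, hspec]
      rw [tr_zero, map_zero]
    · subst hr
      rw [one_smul, one_mul]

lemma rep_functional {m : ℕ} (hm : 1 ≤ m) (hF : Fintype.card F = 2)
    (hE : Fintype.card E = 2 ^ m) (τ : E →ₗ[F] F)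
    (hτ : ∀ x : E, algebraMap F E (τ x) = ∑ t ∈ Finset.range m, x ^ 2 ^ t)
    (L : E →ₗ[F] F) : ∃ a : E, ∀ x, L x = τ (a * x) := by
  haveI : Module.Finite F E := Module.Finite.of_finite
  set R : E →ₗ[F] (E →ₗ[F] F) :=
    { toFun := fun a => τ.comp (LinearMap.mulLeft F a)
      map_add' := by
        intro a b
        apply LinearMap.ext
        intro x
        simp [LinearMap.mulLeft_apply, add_mul]
      map_smul' := by
        intro r a
        apply LinearMap.ext
        intro x
        simp only [LinearMap.comp_apply, LinearMap.mulLeft_apply, LinearMap.smul_apply,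
          RingHom.id_apply, smul_eq_mul, Algebra.smul_def, mul_assoc]
        rw [← Algebra.smul_def, LinearMap.map_smul, smul_eq_mul] } with hR
  have hinj : Function.Injective R := by
    rw [injective_iff_map_eq_zero]
    intro a ha
    by_contra ha0
    obtain ⟨y, hy⟩ := trace_fun_ne_zero (E := E) hm hE
    apply hy
    rw [← hτ y]
    have : τ (a * (a⁻¹ * y)) = 0 := by
      have := congrArg (fun L => L (a⁻¹ * y)) ha
      simpa [hR] using this
    rw [← mul_assoc, mul_inv_cancel₀ ha0, one_mul] at this
    rw [this, map_zero]
  have hsurj : Function.Surjective R := by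
    have hfr : Module.finrank F E = Module.finrank F (E →ₗ[F] F) :=
      (Subspace.dual_finrank_eq (K := F) (V := E)).symm
    exact (LinearMap.injective_iff_surjective_of_finrank_eq_finrank hfr).mp hinj
  obtain ⟨a, ha⟩ := hsurj L
  exact ⟨a, fun x => by rw [← ha]; simp [hR]⟩

variable (F E) in
/-- The parity-check evaluation map for the BCH code with δ = 15 over F₂. -/
noncomputable def bchPhi (n : ℕ) (β : E) : (Fin n → F) →ₗ[F] (Fin 7 → E) where
  toFun c := fun j => ∑ i : Fin n, algebraMap F E (c i) * β ^ ((i : ℕ) * (2 * (j : ℕ) + 1))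
  map_add' a b := by
    funext j
    simp only [Pi.add_apply, map_add, add_mul]
    rw [Finset.sum_add_distrib]
  map_smul' r a := by
    funext j
    simp only [Pi.smul_apply, smul_eq_mul, map_mul, mul_assoc, RingHom.id_apply]
    rw [← Finset.mul_sum, ← Algebra.smul_def]

lemma bchPhi_apply {n : ℕ} (β : E) (c : Fin n → F) (j : Fin 7) :
    bchPhi F E n β c j = ∑ i : Fin n, algebraMap F E (c i) * β ^ ((i : ℕ) * (2 * (j : ℕ) + 1)) :=
  rfl

lemma bchPhi_single {n : ℕ} (β : E) (i : Fin n) (j : Fin 7) :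
    bchPhi F E n β (Pi.single i 1) j = β ^ ((i : ℕ) * (2 * (j : ℕ) + 1)) := by
  rw [bchPhi_apply]
  rw [Finset.sum_eq_single_of_mem i (Finset.mem_univ _)]
  · rw [Pi.single_eq_same, map_one, one_mul]
  · intro i' _ hne
    rw [Pi.single_eq_of_ne hne, map_zero, zero_mul]

lemma bchPhi_surj {m : ℕ} (hm : 14 ≤ m) (hF : Fintype.card F = 2)
    (hE : Fintype.card E = 2 ^ m) (β : E)
    (hβ : ∀ x : E, x ≠ 0 → ∃ k : ℕ, x = β ^ k) :
    LinearMap.range (bchPhi F E (2 ^ m - 1) β) = ⊤ := by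
  by_contra hne
  have hlt : LinearMap.range (bchPhi F E (2 ^ m - 1) β) < ⊤ := lt_top_iff_ne_top.mpr hne
  obtain ⟨f, hf0, hmap⟩ :=
    Submodule.exists_dual_map_eq_bot_of_lt_top hlt inferInstance
  obtain ⟨τ, hτ⟩ := exists_tau (by omega : 1 ≤ m) hF hE
  have hrep : ∀ j : Fin 7, ∃ a : E, ∀ x,
      f.comp (LinearMap.single F (fun _ : Fin 7 => E) j) x = τ (a * x) :=
    fun j => rep_functional (by omega) hF hE τ hτ _
  choose a ha using hrep
  have hfy : ∀ y : Fin 7 → E, f y = ∑ j : Fin 7, τ (a j * y j) := by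
    intro y
    conv_lhs => rw [← Finset.univ_sum_single y]
    rw [map_sum]
    apply Finset.sum_congr rfl
    intro j _
    exact ha j (y j)
  have hzero : ∀ c : Fin (2 ^ m - 1) → F, f (bchPhi F E (2 ^ m - 1) β c) = 0 := by
    intro c
    have hmem : f (bchPhi F E (2 ^ m - 1) β c)
        ∈ (LinearMap.range (bchPhi F E (2 ^ m - 1) β)).map f :=
      Submodule.mem_map_of_mem (LinearMap.mem_range_self _ c)
    rw [hmap] at hmem
    exact (Submodule.mem_bot F).mp hmem
  have htr : ∀ x : E, ∑ t ∈ Finset.range m, (∑ j : Fin 7, a j * x ^ (2 * (j : ℕ) + 1)) ^ 2 ^ t = 0 := by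
    intro x
    rcases eq_or_ne x 0 with rfl | hx
    · have hin : (∑ j : Fin 7, a j * (0:E) ^ (2 * (j : ℕ) + 1)) = 0 := by
        apply Finset.sum_eq_zero
        intro j _
        rw [zero_pow (by omega), mul_zero]
      rw [hin]
      apply Finset.sum_eq_zero
      intro t _
      exact zero_pow (by positivity)
    · obtain ⟨i, hi, hβi⟩ := beta_pow_surj (by omega) hE β hβ x hx
      have h1 : f (bchPhi F E (2 ^ m - 1) β (Pi.single ⟨i, hi⟩ 1)) = 0 := hzero _
      rw [hfy] at h1
      have h2 : ∑ j : Fin 7, τ (a j * β ^ (i * (2 * (j : ℕ) + 1))) = 0 := by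
        rw [← h1]
        apply Finset.sum_congr rfl
        intro j _
        rw [bchPhi_single]
      have h3 : τ (∑ j : Fin 7, a j * β ^ (i * (2 * (j : ℕ) + 1))) = 0 := by
        rw [map_sum]; exact h2
      have h4 := congrArg (algebraMap F E) h3
      rw [hτ, map_zero] at h4
      have h5 : (∑ j : Fin 7, a j * x ^ (2 * (j : ℕ) + 1))
          = ∑ j : Fin 7, a j * β ^ (i * (2 * (j : ℕ) + 1)) := by
        apply Finset.sum_congr rfl
        intro j _
        rw [← hβi, ← pow_mul]
      rw [h5]
      exact h4
  have ha0 : a = 0 := core_poly hm hF hE a htr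
  apply hf0
  apply LinearMap.ext
  intro y
  rw [hfy, LinearMap.zero_apply]
  apply Finset.sum_eq_zero
  intro j _
  rw [ha0]
  simp

lemma code_eq_ker (hF : Fintype.card F = 2) (n : ℕ) (β : E) :
    bchCode F E n 15 β = LinearMap.ker (bchPhi F E n β) := by
  haveI : CharP E 2 := Echar2 (E := E) hF
  haveI : ExpChar E 2 := ExpChar.prime Nat.prime_two
  ext c
  constructor
  · intro hc
    have hc' : ∀ j : ℕ, 1 ≤ j → j ≤ 15 - 1 →
        ∑ i : Fin n, algebraMap F E (c i) * β ^ ((i : ℕ) * j) = 0 := hc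
    rw [LinearMap.mem_ker]
    funext j
    rw [Pi.zero_apply, bchPhi_apply]
    exact hc' (2 * (j : ℕ) + 1) (by omega) (by have := j.isLt; omega)
  · intro hc
    rw [LinearMap.mem_ker] at hc
    have hker : ∀ j : Fin 7,
        ∑ i : Fin n, algebraMap F E (c i) * β ^ ((i : ℕ) * (2 * (j : ℕ) + 1)) = 0 := by
      intro j
      rw [← bchPhi_apply β c j, hc, Pi.zero_apply]
    have key : ∀ (j' t j : ℕ), j' < 7 → j = (2 * j' + 1) * 2 ^ t →
        ∑ i : Fin n, algebraMap F E (c i) * β ^ ((i : ℕ) * j) = 0 := by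
      intro j' t j hj' hjeq
      subst hjeq
      have h2t : (2:ℕ) ^ t ≠ 0 := by positivity
      calc ∑ i : Fin n, algebraMap F E (c i) * β ^ ((i : ℕ) * ((2 * j' + 1) * 2 ^ t))
          = ∑ i : Fin n, (algebraMap F E (c i) * β ^ ((i : ℕ) * (2 * j' + 1))) ^ 2 ^ t := by
            apply Finset.sum_congr rfl
            intro i _
            rw [mul_pow, algebraMap_pow_fix hF _ h2t, ← pow_mul, mul_assoc]
      _ = (∑ i : Fin n, algebraMap F E (c i) * β ^ ((i : ℕ) * (2 * j' + 1))) ^ 2 ^ t := by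
            rw [sum_pow_char_pow]
      _ = 0 := by
            rw [hker ⟨j', hj'⟩, zero_pow h2t]
    intro j h1 h2
    norm_num at h2
    interval_cases j
    · exact key 0 0 1 (by norm_num) (by norm_num)
    · exact key 0 1 2 (by norm_num) (by norm_num)
    · exact key 1 0 3 (by norm_num) (by norm_num)
    · exact key 0 2 4 (by norm_num) (by norm_num)
    · exact key 2 0 5 (by norm_num) (by norm_num)
    · exact key 1 1 6 (by norm_num) (by norm_num)
    · exact key 3 0 7 (by norm_num) (by norm_num)
    · exact key 0 3 8 (by norm_num) (by norm_num)
    · exact key 4 0 9 (by norm_num) (by norm_num)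
    · exact key 2 1 10 (by norm_num) (by norm_num)
    · exact key 5 0 11 (by norm_num) (by norm_num)
    · exact key 1 2 12 (by norm_num) (by norm_num)
    · exact key 6 0 13 (by norm_num) (by norm_num)
    · exact key 3 1 14 (by norm_num) (by norm_num)

lemma seven_m_bound {m : ℕ} (hm : 14 ≤ m) : 7 * m + 2 ≤ 2 ^ m := by
  have h1 : m - 4 < 2 ^ (m - 4) := Nat.lt_two_pow_self
  have h2 : (2:ℕ) ^ m = 16 * 2 ^ (m - 4) := by
    rw [show (16:ℕ) = 2 ^ 4 from rfl, ← pow_add]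
    congr 1
    omega
  omega

lemma finrank_E {m : ℕ} (hF : Fintype.card F = 2) (hE : Fintype.card E = 2 ^ m) :
    Module.finrank F E = m := by
  have h := Module.card_eq_pow_finrank (K := F) (V := E)
  rw [hF, hE] at h
  exact (Nat.pow_right_injective (le_refl 2) h).symm

lemma dim_code {m : ℕ} (hm : 14 ≤ m) (hF : Fintype.card F = 2)
    (hE : Fintype.card E = 2 ^ m) (β : E)
    (hβ : ∀ x : E, x ≠ 0 → ∃ k : ℕ, x = β ^ k) :
    Module.finrank F (bchCode F E (2 ^ m - 1) 15 β) = 2 ^ m - 7 * m - 1 := by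
  haveI : Module.Finite F E := Module.Finite.of_finite
  rw [code_eq_ker hF]
  have hrk := LinearMap.finrank_range_add_finrank_ker (bchPhi F E (2 ^ m - 1) β)
  rw [bchPhi_surj hm hF hE β hβ, finrank_top] at hrk
  have h1 : Module.finrank F (Fin 7 → E) = 7 * m := by
    rw [Module.finrank_pi_fintype, Finset.sum_const, Finset.card_univ, Fintype.card_fin,
      smul_eq_mul, finrank_E hF hE]
  have h2 : Module.finrank F (Fin (2 ^ m - 1) → F) = 2 ^ m - 1 := by
    rw [Module.finrank_pi, Fintype.card_fin]
  rw [h1, h2] at hrk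
  have h3 := seven_m_bound hm
  omega

lemma bch_bound {m : ℕ} (hm : 14 ≤ m) (hF : Fintype.card F = 2)
    (hE : Fintype.card E = 2 ^ m) (β : E)
    (hβ : ∀ x : E, x ≠ 0 → ∃ k : ℕ, x = β ^ k)
    (c : Fin (2 ^ m - 1) → F) (hc : c ∈ bchCode F E (2 ^ m - 1) 15 β) (hc0 : c ≠ 0) :
    15 ≤ hammingNorm c := by
  by_contra hlt
  push_neg at hlt
  have hcode : ∀ j : ℕ, 1 ≤ j → j ≤ 15 - 1 →
      ∑ i : Fin (2 ^ m - 1), algebraMap F E (c i) * β ^ ((i : ℕ) * j) = 0 := hc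
  set T : Finset (Fin (2 ^ m - 1)) := Finset.univ.filter (fun i => c i ≠ 0) with hT
  have hwnorm : hammingNorm c = T.card := rfl
  set w := T.card with hw
  have hw14 : w ≤ 14 := by omega
  set eqv := T.equivFin with heqv
  set e : Fin w → Fin (2 ^ m - 1) := fun k => (eqv.symm k : Fin (2 ^ m - 1)) with he
  have heinj : Function.Injective e := by
    intro k k' hkk
    exact eqv.symm.injective (Subtype.ext hkk)
  set x : Fin w → E := fun k => β ^ ((e k : ℕ)) with hx
  have hxinj : Function.Injective x := by
    intro k k' hkk
    apply heinj
    exact Fin.ext (beta_pow_inj (by omega) hE β hβ (e k).isLt (e k').isLt hkk)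
  set u : Fin w → E := fun k => algebraMap F E (c (e k)) * x k with hu
  have hvdm : ∀ j' : Fin w, ∑ k : Fin w, x k ^ (j' : ℕ) * u k = 0 := by
    intro j'
    have hj1 : 1 ≤ (j' : ℕ) + 1 := by omega
    have hj2 : (j' : ℕ) + 1 ≤ 15 - 1 := by have := j'.isLt; omega
    have h0 := hcode ((j' : ℕ) + 1) hj1 hj2
    have hsub : ∑ i ∈ T, algebraMap F E (c i) * β ^ ((i : ℕ) * ((j' : ℕ) + 1))
        = ∑ i : Fin (2 ^ m - 1), algebraMap F E (c i) * β ^ ((i : ℕ) * ((j' : ℕ) + 1)) := by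
      apply Finset.sum_subset (Finset.subset_univ T)
      intro i _ hiT
      have : c i = 0 := by
        by_contra hne
        exact hiT (Finset.mem_filter.mpr ⟨Finset.mem_univ i, hne⟩)
      rw [this, map_zero, zero_mul]
    have hreindex : ∑ k : Fin w, algebraMap F E (c (e k)) * β ^ ((e k : ℕ) * ((j' : ℕ) + 1))
        = ∑ i ∈ T, algebraMap F E (c i) * β ^ ((i : ℕ) * ((j' : ℕ) + 1)) := by
      calc ∑ k : Fin w, algebraMap F E (c (e k)) * β ^ ((e k : ℕ) * ((j' : ℕ) + 1))
          = ∑ i : {z // z ∈ T}, algebraMap F E (c (i : Fin (2 ^ m - 1)))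
              * β ^ (((i : Fin (2 ^ m - 1)) : ℕ) * ((j' : ℕ) + 1)) :=
            Equiv.sum_comp eqv.symm
              (fun i : {z // z ∈ T} => algebraMap F E (c (i : Fin (2 ^ m - 1)))
                * β ^ (((i : Fin (2 ^ m - 1)) : ℕ) * ((j' : ℕ) + 1)))
      _ = ∑ i ∈ T, algebraMap F E (c i) * β ^ ((i : ℕ) * ((j' : ℕ) + 1)) :=
            Finset.sum_coe_sort T
              (fun i => algebraMap F E (c i) * β ^ ((i : ℕ) * ((j' : ℕ) + 1)))
    have hterm : ∀ k : Fin w, algebraMap F E (c (e k)) * β ^ ((e k : ℕ) * ((j' : ℕ) + 1))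
        = x k ^ (j' : ℕ) * u k := by
      intro k
      rw [hu, hx]
      rw [pow_mul, pow_succ]
      ring
    calc ∑ k : Fin w, x k ^ (j' : ℕ) * u k
        = ∑ k : Fin w, algebraMap F E (c (e k)) * β ^ ((e k : ℕ) * ((j' : ℕ) + 1)) :=
          Finset.sum_congr rfl fun k _ => (hterm k).symm
    _ = 0 := by rw [hreindex, hsub, h0]
  have hdet : ((Matrix.vandermonde x).transpose).det ≠ 0 := by
    rw [Matrix.det_transpose]
    exact Matrix.det_vandermonde_ne_zero_iff.mpr hxinj
  have hmv : (Matrix.vandermonde x).transpose.mulVec u = 0 := by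
    funext j'
    rw [Pi.zero_apply, Matrix.mulVec, dotProduct]
    calc ∑ k : Fin w, (Matrix.vandermonde x).transpose j' k * u k
        = ∑ k : Fin w, x k ^ (j' : ℕ) * u k := by
          apply Finset.sum_congr rfl
          intro k _
          rw [Matrix.transpose_apply]
          rfl
    _ = 0 := hvdm j'
  have hu0 : u = 0 := Matrix.eq_zero_of_mulVec_eq_zero hdet hmv
  obtain ⟨i0, hi0⟩ := Function.ne_iff.mp hc0
  have hi0T : i0 ∈ T := Finset.mem_filter.mpr ⟨Finset.mem_univ _, by simpa using hi0⟩
  set k0 := eqv ⟨i0, hi0T⟩ with hk0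
  have hek0 : e k0 = i0 := by
    simp only [he, hk0, Equiv.symm_apply_apply]
  have huk0 : algebraMap F E (c (e k0)) * β ^ ((e k0 : ℕ)) = 0 := by
    have h' : u k0 = 0 := by rw [hu0]; rfl
    simpa [hu, hx] using h'
  rw [hek0] at huk0
  rcases mul_eq_zero.mp huk0 with h | h
  · have : c i0 = 0 := by
      have hinj := (algebraMap F E).injective
      apply hinj
      rw [h, map_zero]
    exact (by simpa using hi0 : c i0 ≠ 0) this
  · exact pow_ne_zero _ (beta_ne_zero (by omega) hE β hβ) h

lemma pow_sum_subspace (hF : Fintype.card F = 2) (w : ℕ) (hw : w < 4)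
    (aexp : Fin w → ℕ) (v : Fin 4 → E) (jj : ℕ) (hjj : jj = ∑ t : Fin w, 2 ^ (aexp t)) :
    ∑ ε : Fin 4 → F, (∑ i : Fin 4, algebraMap F E (ε i) * v i) ^ jj = 0 := by
  haveI : CharP E 2 := Echar2 (E := E) hF
  haveI : ExpChar E 2 := ExpChar.prime Nat.prime_two
  subst hjj
  -- expand the power as a product, then each factor by Frobenius
  have step12 : ∀ ε : Fin 4 → F,
      (∑ i : Fin 4, algebraMap F E (ε i) * v i) ^ (∑ t : Fin w, 2 ^ (aexp t))
        = ∏ t : Fin w, (∑ i : Fin 4, algebraMap F E (ε i) * v i ^ 2 ^ (aexp t)) := by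
    intro ε
    rw [← Finset.prod_pow_eq_pow_sum]
    apply Finset.prod_congr rfl
    intro t _
    rw [sum_pow_char_pow]
    apply Finset.sum_congr rfl
    intro i _
    rw [mul_pow, algebraMap_pow_fix hF _ (by positivity)]
  calc ∑ ε : Fin 4 → F, (∑ i : Fin 4, algebraMap F E (ε i) * v i) ^ (∑ t : Fin w, 2 ^ (aexp t))
      = ∑ ε : Fin 4 → F, ∏ t : Fin w, (∑ i : Fin 4, algebraMap F E (ε i) * v i ^ 2 ^ (aexp t)) :=
        Finset.sum_congr rfl fun ε _ => step12 ε
  _ = ∑ ε : Fin 4 → F, ∑ p ∈ Fintype.piFinset (fun _ : Fin w => (Finset.univ : Finset (Fin 4))),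
        ∏ t : Fin w, (algebraMap F E (ε (p t)) * v (p t) ^ 2 ^ (aexp t)) := by
        apply Finset.sum_congr rfl
        intro ε _
        rw [Finset.prod_univ_sum]
  _ = ∑ p ∈ Fintype.piFinset (fun _ : Fin w => (Finset.univ : Finset (Fin 4))),
        ∑ ε : Fin 4 → F, ∏ t : Fin w, (algebraMap F E (ε (p t)) * v (p t) ^ 2 ^ (aexp t)) :=
        Finset.sum_comm
  _ = 0 := by
    apply Finset.sum_eq_zero
    intro p _
    have hsplit : ∀ ε : Fin 4 → F, ∏ t : Fin w, (algebraMap F E (ε (p t)) * v (p t) ^ 2 ^ (aexp t))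
        = (∏ t : Fin w, algebraMap F E (ε (p t))) * ∏ t : Fin w, v (p t) ^ 2 ^ (aexp t) :=
      fun ε => Finset.prod_mul_distrib
    rw [Finset.sum_congr rfl fun ε _ => hsplit ε, ← Finset.sum_mul]
    -- show the scalar sum vanishes
    have hkey : ∑ ε : Fin 4 → F, ∏ t : Fin w, algebraMap F E (ε (p t)) = 0 := by
      have h1 : ∀ ε : Fin 4 → F, ∏ t : Fin w, algebraMap F E (ε (p t))
          = algebraMap F E (∏ t : Fin w, ε (p t)) := fun ε => (map_prod _ _ _).symm
      rw [Finset.sum_congr rfl fun ε _ => h1 ε, ← map_sum]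
      suffices h : ∑ ε : Fin 4 → F, ∏ t : Fin w, ε (p t) = 0 by rw [h, map_zero]
      have h2 : ∀ ε : Fin 4 → F, ∏ t : Fin w, ε (p t)
          = ∏ i : Fin 4, (ε i) ^ (Finset.univ.filter (fun t => p t = i)).card := by
        intro ε
        rw [← Finset.prod_fiberwise Finset.univ p (fun t => ε (p t))]
        apply Finset.prod_congr rfl
        intro i _
        calc ∏ t ∈ Finset.univ.filter (fun t => p t = i), ε (p t)
            = ∏ t ∈ Finset.univ.filter (fun t => p t = i), ε i :=
              Finset.prod_congr rfl fun t ht => by rw [(Finset.mem_filter.mp ht).2]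
        _ = (ε i) ^ (Finset.univ.filter (fun t => p t = i)).card := Finset.prod_const _
      rw [Finset.sum_congr rfl fun ε _ => h2 ε]
      have h3 : ∑ ε : Fin 4 → F, ∏ i : Fin 4, (ε i) ^ (Finset.univ.filter (fun t => p t = i)).card
          = ∏ i : Fin 4, ∑ x : F, x ^ (Finset.univ.filter (fun t => p t = i)).card := by
        rw [Finset.prod_univ_sum, Fintype.piFinset_univ]
      rw [h3]
      -- find an empty fiber
      have hcards : ∑ i : Fin 4, (Finset.univ.filter (fun t => p t = i)).card = w := by
        rw [← Finset.card_eq_sum_card_fiberwise (fun t _ => Finset.mem_univ (p t)),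
          Finset.card_univ, Fintype.card_fin]
      have hex : ∃ i0 : Fin 4, (Finset.univ.filter (fun t => p t = i0)).card = 0 := by
        by_contra hno
        push_neg at hno
        have : ∀ i ∈ (Finset.univ : Finset (Fin 4)),
            1 ≤ (Finset.univ.filter (fun t => p t = i)).card :=
          fun i _ => Nat.one_le_iff_ne_zero.mpr (hno i)
        have h4 := Finset.sum_le_sum this
        rw [hcards] at h4
        simp at h4
        omega
      obtain ⟨i0, hi0⟩ := hex
      apply Finset.prod_eq_zero (Finset.mem_univ i0)
      rw [hi0]
      simp only [pow_zero]
      rw [Finset.sum_const, Finset.card_univ, hF]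
      have : (2 : ℕ) • (1 : F) = 1 + 1 := by rw [two_smul]
      rw [this, Fchar2 hF]
    rw [hkey, zero_mul]

lemma pow_sum_subspace14 (hF : Fintype.card F = 2) (v : Fin 4 → E) (j : ℕ)
    (h1 : 1 ≤ j) (h2 : j ≤ 14) :
    ∑ ε : Fin 4 → F, (∑ i : Fin 4, algebraMap F E (ε i) * v i) ^ j = 0 := by
  interval_cases j
  · exact pow_sum_subspace hF 1 (by norm_num) ![0] v 1 (by decide)
  · exact pow_sum_subspace hF 1 (by norm_num) ![1] v 2 (by decide)
  · exact pow_sum_subspace hF 2 (by norm_num) ![0, 1] v 3 (by decide)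
  · exact pow_sum_subspace hF 1 (by norm_num) ![2] v 4 (by decide)
  · exact pow_sum_subspace hF 2 (by norm_num) ![0, 2] v 5 (by decide)
  · exact pow_sum_subspace hF 2 (by norm_num) ![1, 2] v 6 (by decide)
  · exact pow_sum_subspace hF 3 (by norm_num) ![0, 1, 2] v 7 (by decide)
  · exact pow_sum_subspace hF 1 (by norm_num) ![3] v 8 (by decide)
  · exact pow_sum_subspace hF 2 (by norm_num) ![0, 3] v 9 (by decide)
  · exact pow_sum_subspace hF 2 (by norm_num) ![1, 3] v 10 (by decide)
  · exact pow_sum_subspace hF 3 (by norm_num) ![0, 1, 3] v 11 (by decide)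
  · exact pow_sum_subspace hF 2 (by norm_num) ![2, 3] v 12 (by decide)
  · exact pow_sum_subspace hF 3 (by norm_num) ![0, 2, 3] v 13 (by decide)
  · exact pow_sum_subspace hF 3 (by norm_num) ![1, 2, 3] v 14 (by decide)

lemma exists_weight15 {m : ℕ} (hm : 14 ≤ m) (hF : Fintype.card F = 2)
    (hE : Fintype.card E = 2 ^ m) (β : E)
    (hβ : ∀ x : E, x ≠ 0 → ∃ k : ℕ, x = β ^ k) :
    ∃ c : Fin (2 ^ m - 1) → F, c ∈ bchCode F E (2 ^ m - 1) 15 β ∧ c ≠ 0 ∧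
      hammingNorm c = 15 := by
  classical
  haveI : Module.Finite F E := Module.Finite.of_finite
  have hfr : Module.finrank F E = m := finrank_E hF hE
  have h4 : 4 ≤ Module.finrank F E := by omega
  set b := Module.finBasis F E with hb
  set v : Fin 4 → E := fun k => b (Fin.castLE h4 k) with hv
  set g : (Fin 4 → F) → E := fun ε => ∑ i : Fin 4, algebraMap F E (ε i) * v i with hg
  have hg0 : g 0 = 0 := by
    rw [hg]
    apply Finset.sum_eq_zero
    intro i _
    simp
  have hli : LinearIndependent F v := b.linearIndependent.comp _ (Fin.castLE_injective h4)
  have hginj : Function.Injective g := by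
    intro ε ε' hee
    have hdiff : ∑ i : Fin 4, (ε i - ε' i) • v i = 0 := by
      have : ∀ i : Fin 4, (ε i - ε' i) • v i
          = algebraMap F E (ε i) * v i - algebraMap F E (ε' i) * v i := by
        intro i
        rw [sub_smul, Algebra.smul_def, Algebra.smul_def]
      rw [Finset.sum_congr rfl fun i _ => this i, Finset.sum_sub_distrib, sub_eq_zero]
      exact hee
    have := Fintype.linearIndependent_iff.mp hli (fun i => ε i - ε' i) hdiff
    funext i
    have h' := this i
    have : ε i - ε' i = 0 := h'
    linear_combination this
  -- the codeword
  set cond : Fin (2 ^ m - 1) → Prop := fun i => ∃ ε : Fin 4 → F, ε ≠ 0 ∧ g ε = β ^ (i : ℕ)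
    with hcond
  set c : Fin (2 ^ m - 1) → F := fun i => if cond i then 1 else 0 with hc
  set A : Finset (Fin (2 ^ m - 1)) := Finset.univ.filter (fun i => c i ≠ 0) with hA
  set B : Finset (Fin 4 → F) := Finset.univ.filter (fun ε => ε ≠ 0) with hB
  have hcA : ∀ i ∈ A, c i = 1 := by
    intro i hi
    have hci : c i = if cond i then 1 else 0 := rfl
    by_cases hcd : cond i
    · rw [hci, if_pos hcd]
    · exact absurd (hci.trans (if_neg hcd)) (Finset.mem_filter.mp hi).2
  have hgne : ∀ ε ∈ B, g ε ≠ 0 := by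
    intro ε hε hgz
    have hε0 : ε ≠ 0 := (Finset.mem_filter.mp hε).2
    exact hε0 (hginj (hgz.trans hg0.symm))
  -- the index map
  have hIex : ∀ ε ∈ B, ∃ i : ℕ, i < 2 ^ m - 1 ∧ β ^ i = g ε :=
    fun ε hε => beta_pow_surj (by omega) hE β hβ (g ε) (hgne ε hε)
  set I : ∀ ε ∈ B, Fin (2 ^ m - 1) := fun ε hε =>
    ⟨(hIex ε hε).choose, (hIex ε hε).choose_spec.1⟩ with hI
  have hIβ : ∀ ε (hε : ε ∈ B), β ^ ((I ε hε : ℕ)) = g ε :=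
    fun ε hε => (hIex ε hε).choose_spec.2
  have hImem : ∀ ε (hε : ε ∈ B), I ε hε ∈ A := by
    intro ε hε
    rw [hA, Finset.mem_filter]
    refine ⟨Finset.mem_univ _, ?_⟩
    have hcd : cond (I ε hε) := ⟨ε, (Finset.mem_filter.mp hε).2, (hIβ ε hε).symm⟩
    have hci : c (I ε hε) = if cond (I ε hε) then 1 else 0 := rfl
    rw [hci, if_pos hcd]
    exact one_ne_zero
  have hIinj : ∀ ε (hε : ε ∈ B) ε' (hε' : ε' ∈ B), I ε hε = I ε' hε' → ε = ε' := by
    intro ε hε ε' hε' hII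
    apply hginj
    rw [← hIβ ε hε, ← hIβ ε' hε', hII]
  have hIsurj : ∀ i ∈ A, ∃ ε, ∃ (hε : ε ∈ B), I ε hε = i := by
    intro i hi
    have hcd : cond i := by
      by_contra hcd
      have hci : c i = if cond i then 1 else 0 := rfl
      exact (Finset.mem_filter.mp hi).2 (hci.trans (if_neg hcd))
    obtain ⟨ε, hε0, hgε⟩ := hcd
    have hεB : ε ∈ B := Finset.mem_filter.mpr ⟨Finset.mem_univ _, hε0⟩
    refine ⟨ε, hεB, ?_⟩
    apply Fin.ext
    apply beta_pow_inj (by omega : 2 ≤ m) hE β hβ (I ε hεB).isLt i.isLt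
    rw [hIβ ε hεB, hgε]
  -- membership in the code
  have hmem : c ∈ bchCode F E (2 ^ m - 1) 15 β := by
    intro j hj1 hj2
    norm_num at hj2
    have hsub : ∑ i ∈ A, algebraMap F E (c i) * β ^ ((i : ℕ) * j)
        = ∑ i : Fin (2 ^ m - 1), algebraMap F E (c i) * β ^ ((i : ℕ) * j) := by
      apply Finset.sum_subset (Finset.subset_univ A)
      intro i _ hiA
      have : c i = 0 := by
        by_contra hne
        exact hiA (Finset.mem_filter.mpr ⟨Finset.mem_univ i, hne⟩)
      rw [this, map_zero, zero_mul]
    have hone : ∑ i ∈ A, algebraMap F E (c i) * β ^ ((i : ℕ) * j)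
        = ∑ i ∈ A, β ^ ((i : ℕ) * j) := by
      apply Finset.sum_congr rfl
      intro i hi
      rw [hcA i hi, map_one, one_mul]
    have hbij : ∑ ε ∈ B, (g ε) ^ j = ∑ i ∈ A, β ^ ((i : ℕ) * j) := by
      apply Finset.sum_bij I hImem hIinj hIsurj
      intro ε hε
      rw [pow_mul, hIβ ε hε]
    have hsplit : ∑ ε ∈ B, (g ε) ^ j = ∑ ε : Fin 4 → F, (g ε) ^ j := by
      have hBe : B = Finset.univ.erase 0 := by
        rw [hB, Finset.filter_ne']
      rw [hBe]
      have h5 := Finset.sum_erase_add Finset.univ (fun ε : Fin 4 → F => (g ε) ^ j)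
        (Finset.mem_univ 0)
      simp only [hg0, zero_pow (by omega : j ≠ 0), add_zero] at h5
      exact h5
    have hzero : ∑ ε : Fin 4 → F, (g ε) ^ j = 0 := by
      rw [hg]
      exact pow_sum_subspace14 hF v j hj1 hj2
    rw [← hsub, hone, ← hbij, hsplit, hzero]
  -- the weight
  have hnorm : hammingNorm c = 15 := by
    have hAB : B.card = A.card := Finset.card_bij I hImem hIinj hIsurj
    have hBcard : B.card = 15 := by
      rw [hB, Finset.filter_ne', Finset.card_erase_of_mem (Finset.mem_univ 0),
        Finset.card_univ]
      rw [Fintype.card_fun, hF, Fintype.card_fin]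
      norm_num
    have : hammingNorm c = A.card := rfl
    omega
  refine ⟨c, hmem, ?_, hnorm⟩
  intro hc0
  rw [hc0] at hnorm
  rw [hammingNorm_eq_zero.mpr rfl] at hnorm
  exact absurd hnorm (by norm_num)


end BCHAux

/-- binary BCH codes with designed distance 15. For `14 ∣ m` with
`m ≥ 14`, the binary narrow-sense primitive BCH code `C_(2, 2^m - 1, 15, 1)` has
dimension `2^m - 7m - 1` over `F_2` and minimum distance exactly `15`. -/
theorem binary_bch_delta_fifteen
    (m : ℕ) (hm14 : 14 ∣ m) (hm : 14 ≤ m)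
    (F E : Type) [Field F] [Fintype F] [DecidableEq F] [Field E] [Fintype E] [Algebra F E]
    (hF : Fintype.card F = 2) (hE : Fintype.card E = 2 ^ m)
    (β : E) (hβ : ∀ x : E, x ≠ 0 → ∃ k : ℕ, x = β ^ k) :
    Module.finrank F (bchCode F E (2 ^ m - 1) 15 β) = 2 ^ m - 7 * m - 1 ∧
    hasMinDist (bchCode F E (2 ^ m - 1) 15 β) 15 := by
  refine ⟨dim_code hm hF hE β hβ, ?_, ?_⟩
  · obtain ⟨c, hcm, hc0, hcn⟩ := exists_weight15 hm hF hE β hβ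
    exact ⟨c, hcm, hc0, hcn⟩
  · intro c hc hc0
    exact bch_bound hm hF hE β hβ c hc hc0
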